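/- For all n ≥ 2, the porous exponential domination number of the hypercube satisfies γ*_e(Q_n) ≤ 2 · γ*_e(Q_{n−2}). -/
import Mathlib


open SimpleGraph Finset

/-- The weight `2^(1 - dist(u,v))` that vertex `u` sends to vertex `v` in graph `G`. -/
noncomputable def expWeight {V : Type*} (G : SimpleGraph V) (u v : V) : ℝ :=
  (2 : ℝ) ^ ((1 : ℤ) - (G.dist u v : ℤ))

/-- `D` is a porous exponential dominating set of `G` if every vertex receives total
weight at least `1`. -/
def IsPorousExpDomSet {V : Type*} [Fintype V] (G : SimpleGraph V) (D : Finset V) : Prop :=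
  ∀ v : V, 1 ≤ ∑ d ∈ D, expWeight G d v

/-- The porous exponential domination number: the minimum cardinality of a porous
exponential dominating set. -/
noncomputable def porousExpDomNumber {V : Type*} [Fintype V] (G : SimpleGraph V) : ℕ :=
  sInf {k | ∃ D : Finset V, IsPorousExpDomSet G D ∧ D.card = k}

/-- The King grid `K_n = P_n ⊠ P_n`: vertices `(i,j)` with `1 ≤ i,j ≤ n`, two distinct
vertices adjacent iff both coordinates differ by at most 1. -/
def kingGrid (n : ℕ) : SimpleGraph (Fin n × Fin n) :=
  SimpleGraph.fromRel fun v w =>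
    ((v.1 : ℤ) - (w.1 : ℤ)).natAbs ≤ 1 ∧ ((v.2 : ℤ) - (w.2 : ℤ)).natAbs ≤ 1

/-- The Slant grid `S_n`: the grid `P_n □ P_n` together with the diagonal edges
`(i,j) ~ (i+1,j+1)`. -/
def slantGrid (n : ℕ) : SimpleGraph (Fin n × Fin n) :=
  SimpleGraph.fromRel fun v w =>
    ((w.1 : ℕ) = (v.1 : ℕ) + 1 ∧ (w.2 : ℕ) = (v.2 : ℕ)) ∨
    ((w.1 : ℕ) = (v.1 : ℕ) ∧ (w.2 : ℕ) = (v.2 : ℕ) + 1) ∨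
    ((w.1 : ℕ) = (v.1 : ℕ) + 1 ∧ (w.2 : ℕ) = (v.2 : ℕ) + 1)

/-- The `n`-dimensional hypercube: vertices are `{0,1}^n`, adjacent iff they differ in
exactly one coordinate. -/
def hypercube (n : ℕ) : SimpleGraph (Fin n → Bool) :=
  SimpleGraph.fromRel fun u v => hammingDist u v = 1


lemma hypercube_adj {n : ℕ} {u v : Fin n → Bool} :
    (hypercube n).Adj u v ↔ hammingDist u v = 1 := by
  constructor
  · rintro ⟨hne, h | h⟩
    · exact h
    · rw [hammingDist_comm]; exact h
  · intro h
    exact ⟨fun e => by simp [e, hammingDist_self] at h, Or.inl h⟩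

lemma hypercube_exists_walk {n : ℕ} : ∀ (k : ℕ) (u v : Fin n → Bool),
    hammingDist u v = k → ∃ p : (hypercube n).Walk u v, p.length = k := by
  intro k
  induction k with
  | zero =>
    intro u v h
    obtain rfl := eq_of_hammingDist_eq_zero h
    exact ⟨SimpleGraph.Walk.nil, rfl⟩
  | succ k ih =>
    intro u v h
    have hne : u ≠ v := by
      intro e; rw [e, hammingDist_self] at h; omega
    obtain ⟨i, hi⟩ : ∃ i, u i ≠ v i := Function.ne_iff.mp hne
    set u' := Function.update u i (v i) with hu'
    have hmem : i ∈ ({j | u j ≠ v j} : Finset (Fin n)) := by simpa using hi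
    have hfil : ({j | u' j ≠ v j} : Finset (Fin n)) = ({j | u j ≠ v j} : Finset (Fin n)).erase i := by
      ext j
      rcases eq_or_ne j i with rfl | hj
      · simp [hu', Function.update_self]
      · simp [hu', Function.update_of_ne hj, hj]
    have h1 : hammingDist u' v = k := by
      have : hammingDist u' v = hammingDist u v - 1 := by
        rw [hammingDist, hammingDist, hfil, Finset.card_erase_of_mem hmem]
      omega
    have hadj : (hypercube n).Adj u u' := by
      rw [hypercube_adj]
      have : ({j | u j ≠ u' j} : Finset (Fin n)) = {i} := by
        ext j
        rcases eq_or_ne j i with rfl | hj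
        · simp [hu', Function.update_self, hi]
        · simp [hu', Function.update_of_ne hj, hj]
      rw [hammingDist, this, Finset.card_singleton]
    obtain ⟨p, hp⟩ := ih u' v h1
    exact ⟨SimpleGraph.Walk.cons hadj p, by simp [hp]⟩

lemma hamming_le_walk_length {n : ℕ} {u v : Fin n → Bool} (p : (hypercube n).Walk u v) :
    hammingDist u v ≤ p.length := by
  induction p with
  | nil => simp [hammingDist_self]
  | @cons a b c h p ih =>
    calc hammingDist a c ≤ hammingDist a b + hammingDist b c := hammingDist_triangle _ _ _
    _ ≤ 1 + p.length := by
        have := hypercube_adj.mp h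
        omega
    _ = (SimpleGraph.Walk.cons h p).length := by simp [Nat.add_comm]

lemma hypercube_dist {n : ℕ} (u v : Fin n → Bool) :
    (hypercube n).dist u v = hammingDist u v := by
  obtain ⟨p, hp⟩ := hypercube_exists_walk (hammingDist u v) u v rfl
  refine le_antisymm (hp ▸ SimpleGraph.dist_le p) ?_
  obtain ⟨q, hq⟩ := SimpleGraph.Reachable.exists_walk_length_eq_dist ⟨p⟩
  rw [← hq]
  exact hamming_le_walk_length q

lemma hammingDist_snoc {m : ℕ} (f g : Fin m → Bool) (a b : Bool) :
    hammingDist (Fin.snoc f a : Fin (m+1) → Bool) (Fin.snoc g b : Fin (m+1) → Bool)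
      = hammingDist f g + (if a = b then 0 else 1) := by
  classical
  simp only [hammingDist, Finset.card_filter, Fin.sum_univ_castSucc, Fin.snoc_castSucc,
    Fin.snoc_last]
  congr 1
  by_cases h : a = b <;> simp [h]

lemma expWeight_nonneg {V : Type*} (G : SimpleGraph V) (u v : V) : 0 ≤ expWeight G u v :=
  le_of_lt (zpow_pos two_pos _)

lemma key00 (h : ℤ) : (2:ℝ)^(1-h) ≤ 2^(1-h) + 2^(1-(h+2)) := by
  nlinarith [zpow_pos (two_pos (α := ℝ)) (1-(h+2))]

lemma key11 (h : ℤ) : (2:ℝ)^(1-h) ≤ 2^(1-(h+1)) + 2^(1-(h+1)) := by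
  have h2 : (2:ℝ)^(1-(h+1)) = 2^(1-h) / 2 := by
    rw [show (1:ℤ)-(h+1) = (1-h)+(-1) by ring, zpow_add₀ (two_ne_zero (α := ℝ))]
    norm_num
    ring
  rw [h2]; ring_nf
  linarith

/-- For `n ≥ 2`, `γ*_e(Q_n) ≤ 2·γ*_e(Q_{n−2})`. -/
theorem hypercube_porousExpDomNumber_descent (n : ℕ) (hn : 2 ≤ n) :
    porousExpDomNumber (hypercube n) ≤ 2 * porousExpDomNumber (hypercube (n - 2)) := by
  obtain ⟨m, rfl⟩ : ∃ m, n = m + 2 := ⟨n - 2, by omega⟩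
  rw [show m + 2 - 2 = m from rfl]
  -- the minimum for Q_m is attained
  have hne : {k | ∃ D : Finset (Fin m → Bool), IsPorousExpDomSet (hypercube m) D ∧ D.card = k}.Nonempty := by
    refine ⟨(Finset.univ : Finset (Fin m → Bool)).card, Finset.univ, ?_, rfl⟩
    intro v
    calc (1:ℝ) ≤ expWeight (hypercube m) v v := by
          norm_num [expWeight, SimpleGraph.dist_self]
    _ ≤ ∑ d ∈ Finset.univ, expWeight (hypercube m) d v :=
          Finset.single_le_sum (fun d _ => expWeight_nonneg _ d v) (Finset.mem_univ v)
  obtain ⟨D, hD, hcard⟩ := Nat.sInf_mem hne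
  set ext : (Fin m → Bool) → Bool → (Fin (m+2) → Bool) :=
    fun d c => Fin.snoc (Fin.snoc d c) c with hext
  have hinj : ∀ c, Function.Injective (fun d => ext d c) := by
    intro c x y h
    funext i
    have := congrFun h (i.castSucc.castSucc)
    simpa [hext] using this
  set D' : Finset (Fin (m+2) → Bool) :=
    D.image (fun d => ext d false) ∪ D.image (fun d => ext d true) with hD'
  have hdisj : Disjoint (D.image (fun d => ext d false)) (D.image (fun d => ext d true)) := by
    rw [Finset.disjoint_left]
    rintro x hx hx'
    obtain ⟨d, _, rfl⟩ := Finset.mem_image.mp hx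
    obtain ⟨d', _, he⟩ := Finset.mem_image.mp hx'
    have := congrFun he (Fin.last (m+1))
    simp [hext] at this
  have hdom : IsPorousExpDomSet (hypercube (m+2)) D' := by
    intro v
    obtain ⟨v', aa, bb, rfl⟩ : ∃ v' aa bb, v = Fin.snoc (Fin.snoc v' aa) bb :=
      ⟨Fin.init (Fin.init v), Fin.init v (Fin.last m), v (Fin.last (m+1)), by
        rw [Fin.snoc_init_self, Fin.snoc_init_self]⟩
    rw [hD', Finset.sum_union hdisj, Finset.sum_image (fun x _ y _ h => hinj false h),
      Finset.sum_image (fun x _ y _ h => hinj true h), ← Finset.sum_add_distrib]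
    refine le_trans (hD v') (Finset.sum_le_sum fun d _ => ?_)
    simp only [expWeight, hypercube_dist, hext, hammingDist_snoc]
    have hmix : (2:ℝ) ^ ((1:ℤ) - (hammingDist d v' : ℤ))
        ≤ ((2:ℝ) ^ hammingDist d v')⁻¹ + ((2:ℝ) ^ hammingDist d v')⁻¹ := by
      rw [show (1:ℤ) - (hammingDist d v' : ℤ) = 1 + -(hammingDist d v' : ℤ) by ring,
        zpow_add₀ (two_ne_zero (α := ℝ)), zpow_neg, zpow_natCast, zpow_one]
      linarith
    cases aa <;> cases bb <;> simp
    · positivity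
    · exact hmix
    · exact hmix
    · positivity
  have hDcard : D'.card ≤ 2 * D.card := by
    rw [hD', Finset.card_union_of_disjoint hdisj,
      Finset.card_image_of_injective _ (hinj false),
      Finset.card_image_of_injective _ (hinj true)]
    omega
  calc porousExpDomNumber (hypercube (m+2)) ≤ D'.card := Nat.sInf_le ⟨D', hdom, rfl⟩
  _ ≤ 2 * D.card := hDcard
  _ = 2 * porousExpDomNumber (hypercube m) := by rw [porousExpDomNumber, hcard]
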